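/- arXiv:2512.11601 — 2 statements merged into one kernel-verified Lean document; each statement's English description precedes it below -/
import Mathlib

section
/- For every ℓ ≥ 1, there exists a constant C (one may take C = φℓ + ℓ(φ-1) + 2) such that |a_n - ⌊(n+ℓ)φ⌋| ≤ C for all n ≥ 0; that is, the function λ_ℓ(n) := a_n - ⌊(n+ℓ)φ⌋ is bounded. -/
/-- The minimum excluded value of a set of natural numbers. -/
noncomputable def mex (S : Set ℕ) : ℕ := sInf {m : ℕ | m ∉ S}

/-- `MexSeq ℓ a b` says that `a`, `b` are the sequences defined by
    `a 0 = ℓ+1`, `b 0 = 2ℓ+2`, and for `n ≥ 1`: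
    `a n = mex({a i, b i : i < n} ∪ {0,…,ℓ})`, `b n = a n + n + ℓ + 1`. -/
def MexSeq (ℓ : ℕ) (a b : ℕ → ℕ) : Prop :=
  a 0 = ℓ + 1 ∧ b 0 = 2 * ℓ + 2 ∧
  (∀ n : ℕ, 1 ≤ n →
    a n = mex ({m : ℕ | ∃ i < n, m = a i ∨ m = b i} ∪ {m : ℕ | m ≤ ℓ})) ∧
  (∀ n : ℕ, 1 ≤ n → b n = a n + n + ℓ + 1)

noncomputable def phi : ℝ := (1 + Real.sqrt 5) / 2


def mexSet (ℓ : ℕ) (a b : ℕ → ℕ) (n : ℕ) : Set ℕ :=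
  {m : ℕ | ∃ i < n, m = a i ∨ m = b i} ∪ {m : ℕ | m ≤ ℓ}

lemma mexSet_finite (ℓ : ℕ) (a b : ℕ → ℕ) (n : ℕ) : (mexSet ℓ a b n).Finite := by
  apply Set.Finite.union
  · apply Set.Finite.subset (((Set.finite_Iio n).image a).union ((Set.finite_Iio n).image b))
    rintro m ⟨i, hi, h | h⟩
    · exact Or.inl ⟨i, hi, h.symm⟩
    · exact Or.inr ⟨i, hi, h.symm⟩
  · exact Set.finite_le_nat ℓ

lemma mex_not_mem {S : Set ℕ} (h : S.Finite) : mex S ∉ S := by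
  have : mex S ∈ {m : ℕ | m ∉ S} := Nat.sInf_mem (h.infinite_compl.nonempty)
  exact this

lemma mem_of_lt_mex {S : Set ℕ} {m : ℕ} (h : m < mex S) : m ∈ S := by
  by_contra hm
  exact absurd (Nat.sInf_le hm) (not_le.2 h)

section seqs
variable {ℓ : ℕ} {a b : ℕ → ℕ} (hab : MexSeq ℓ a b)
include hab

lemma hb_all : ∀ n, b n = a n + n + ℓ + 1 := by
  intro n
  rcases Nat.eq_zero_or_pos n with rfl | hn
  · rw [hab.2.1, hab.1]; ring
  · exact hab.2.2.2 n hn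

lemma ha_mex : ∀ n, 1 ≤ n → a n = mex (mexSet ℓ a b n) := hab.2.2.1

lemma a_strictMono : StrictMono a := by
  apply strictMono_nat_of_lt_succ
  intro n
  have h1 : a (n+1) = mex (mexSet ℓ a b (n+1)) := ha_mex hab (n+1) (Nat.le_add_left 1 n)
  have hnm : a (n+1) ∉ mexSet ℓ a b (n+1) := by
    rw [h1]; exact mex_not_mem (mexSet_finite ℓ a b (n+1))
  by_contra hle
  push_neg at hle
  apply hnm
  rcases lt_or_eq_of_le hle with hlt | heq
  · -- a (n+1) < a n
    rcases Nat.eq_zero_or_pos n with rfl | hn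
    · -- a 0 = ℓ + 1, so a 1 ≤ ℓ
      right
      have h0 := hab.1
      simp only [Set.mem_setOf_eq]
      omega
    · have : a (n+1) ∈ mexSet ℓ a b n := by
        have h2 := ha_mex hab n hn
        exact mem_of_lt_mex (h2 ▸ hlt)
      rcases this with ⟨i, hi, h⟩ | h
      · exact Or.inl ⟨i, hi.trans (Nat.lt_succ_self n), h⟩
      · exact Or.inr h
  · exact Or.inl ⟨n, Nat.lt_succ_self n, Or.inl heq⟩

lemma a_gt_l : ∀ n, ℓ < a n := by
  intro n
  have : a 0 ≤ a n := (a_strictMono hab).monotone (Nat.zero_le n)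
  have h0 := hab.1
  omega

lemma a_ne_b : ∀ i j, a i ≠ b j := by
  intro i j
  rcases le_or_gt i j with h | h
  · have h1 : a i ≤ a j := (a_strictMono hab).monotone h
    have := hb_all hab j
    omega
  · -- j < i, so i ≥ 1 and b j ∈ mexSet i while a i ∉ mexSet i
    have h1 : a i = mex (mexSet ℓ a b i) := ha_mex hab i (by omega)
    have hnm : a i ∉ mexSet ℓ a b i := by
      rw [h1]; exact mex_not_mem (mexSet_finite ℓ a b i)
    intro he
    exact hnm (Or.inl ⟨j, h, Or.inr he⟩)

end seqs

section seqs2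
variable {ℓ : ℕ} {a b : ℕ → ℕ} (hab : MexSeq ℓ a b)
include hab

lemma b_strictMono : StrictMono b := by
  apply strictMono_nat_of_lt_succ
  intro n
  have h1 := hb_all hab n
  have h2 := hb_all hab (n+1)
  have h3 : a n < a (n+1) := a_strictMono hab (by omega)
  omega

lemma count_identity : ∀ n, 1 ≤ n →
    a n = ℓ + 1 + n + ((Finset.range n).filter (fun i => b i < a n)).card := by
  intro n hn
  have hmono := a_strictMono hab
  have hbmono := b_strictMono hab
  have hgt := a_gt_l hab
  have hne := a_ne_b hab
  have hmx := ha_mex hab n hn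
  set T : Finset ℕ :=
    Finset.range (ℓ+1) ∪ (Finset.range n).image a ∪
      (((Finset.range n).filter (fun i => b i < a n)).image b) with hT
  have hTeq : T = Finset.range (a n) := by
    ext m
    simp only [hT, Finset.mem_union, Finset.mem_image, Finset.mem_range, Finset.mem_filter]
    constructor
    · rintro ((h | ⟨i, hi, rfl⟩) | ⟨i, ⟨hi, hbi⟩, rfl⟩)
      · exact lt_of_le_of_lt (Nat.lt_succ_iff.mp h) (hgt n)
      · exact hmono hi
      · exact hbi
    · intro hm
      have : m ∈ mexSet ℓ a b n := mem_of_lt_mex (hmx ▸ hm)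
      rcases this with ⟨i, hi, rfl | rfl⟩ | h
      · exact Or.inl (Or.inr ⟨i, hi, rfl⟩)
      · exact Or.inr ⟨i, ⟨hi, hm⟩, rfl⟩
      · exact Or.inl (Or.inl (Nat.lt_succ_of_le h))
  have hd1 : Disjoint (Finset.range (ℓ+1)) ((Finset.range n).image a) := by
    rw [Finset.disjoint_left]
    intro m hm hm2
    obtain ⟨i, _, rfl⟩ := Finset.mem_image.mp hm2
    exact absurd (Nat.lt_succ_iff.mp (Finset.mem_range.mp hm)) (not_le.2 (hgt i))
  have hd2 : Disjoint (Finset.range (ℓ+1) ∪ (Finset.range n).image a)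
      ((((Finset.range n).filter (fun i => b i < a n)).image b)) := by
    rw [Finset.disjoint_left]
    intro m hm hm2
    obtain ⟨j, _, rfl⟩ := Finset.mem_image.mp hm2
    rcases Finset.mem_union.mp hm with h | h
    · have hbj := hb_all hab j
      have := hgt j
      have := Finset.mem_range.mp h
      omega
    · obtain ⟨i, _, hi⟩ := Finset.mem_image.mp h
      exact hne i j hi
  have hcard : T.card = (ℓ+1) + n + ((Finset.range n).filter (fun i => b i < a n)).card := by
    rw [hT, Finset.card_union_of_disjoint hd2, Finset.card_union_of_disjoint hd1,
      Finset.card_range, Finset.card_image_of_injective _ hmono.injective,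
      Finset.card_image_of_injective _ hbmono.injective, Finset.card_range]
  have := hTeq ▸ hcard
  rw [Finset.card_range] at this
  omega

end seqs2

lemma phi_facts : phi * phi = phi + 1 ∧ 1.6 < phi ∧ phi < 1.7 := by
  have h5 : Real.sqrt 5 ^ 2 = 5 := Real.sq_sqrt (by norm_num)
  have hnn : 0 ≤ Real.sqrt 5 := Real.sqrt_nonneg 5
  have hl : 2.2 < Real.sqrt 5 := by nlinarith
  have hu : Real.sqrt 5 < 2.4 := by nlinarith
  refine ⟨?_, ?_, ?_⟩ <;> unfold phi <;> nlinarith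

set_option maxHeartbeats 2000000 in
lemma main_bound {ℓ : ℕ} (hℓ : 1 ≤ ℓ) {a b : ℕ → ℕ} (hab : MexSeq ℓ a b) :
    ∀ n : ℕ, |(a n : ℝ) - ((n : ℝ) + ℓ) * phi| ≤ 5 * ℓ + 5 := by
  obtain ⟨hφ, hφl, hφu⟩ := phi_facts
  have hφ1 : (0:ℝ) < phi + 1 := by linarith
  have hℓR : (1:ℝ) ≤ (ℓ:ℝ) := by exact_mod_cast hℓ
  set C : ℝ := 5 * ℓ + 5 with hC
  intro n
  induction n using Nat.strong_induction_on with
  | _ n ih =>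
  rcases Nat.eq_zero_or_pos n with rfl | hn
  · rw [hab.1]
    push_cast
    rw [abs_le]
    constructor <;> nlinarith
  · -- n ≥ 1
    have hid := count_identity hab n hn
    set F := (Finset.range n).filter (fun i => b i < a n) with hF
    set A := (a n : ℝ) with hA
    have hidR : A = (ℓ:ℝ) + 1 + n + F.card := by
      rw [hA, hid]; push_cast; ring
    have hA0 : (0:ℝ) ≤ A := by positivity
    have hn0 : (0:ℝ) ≤ (n:ℝ) := by positivity
    -- upper bound on F.card
    set X : ℝ := max ((A + C - 1) / (phi + 1) - ℓ) 0 with hX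
    have hX0 : 0 ≤ X := le_max_right _ _
    have hcX : (A + C - 1) / (phi + 1) * (phi + 1) = A + C - 1 :=
      div_mul_cancel₀ _ (ne_of_gt hφ1)
    have hfub : (F.card : ℝ) ≤ X + 1 := by
      have hsub : F ⊆ Finset.range ⌈X⌉₊ := by
        intro i hi
        rw [hF, Finset.mem_filter, Finset.mem_range] at hi
        obtain ⟨hin, hbi⟩ := hi
        rw [Finset.mem_range, Nat.lt_ceil]
        have hIH := (abs_le.mp (ih i hin)).1
        have hbiR : (b i : ℝ) = (a i : ℝ) + i + ℓ + 1 := by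
          rw [hb_all hab i]; push_cast; ring
        have hbiA : (b i : ℝ) < A := by rw [hA]; exact_mod_cast hbi
        -- (i+ℓ)(φ+1) < A + C - 1
        have h1 : ((i:ℝ) + ℓ) * (phi + 1) < A + C - 1 := by nlinarith
        have h2 : (i:ℝ) + ℓ < (A + C - 1) / (phi + 1) := by
          rw [lt_div_iff₀ hφ1]; exact h1
        have : (i:ℝ) < (A + C - 1) / (phi + 1) - ℓ := by linarith
        exact lt_max_iff.mpr (Or.inl this)
      have h3 : F.card ≤ ⌈X⌉₊ := by
        simpa using Finset.card_le_card hsub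
      have h4 : (⌈X⌉₊ : ℝ) < X + 1 := Nat.ceil_lt_add_one hX0
      calc (F.card : ℝ) ≤ (⌈X⌉₊ : ℝ) := by exact_mod_cast h3
        _ ≤ X + 1 := h4.le
    -- lower bound on F.card
    set Y : ℝ := min ((A - C - 1) / (phi + 1) - ℓ) (n:ℝ) with hY
    have hcY : (A - C - 1) / (phi + 1) * (phi + 1) = A - C - 1 :=
      div_mul_cancel₀ _ (ne_of_gt hφ1)
    have hflb : Y ≤ (F.card : ℝ) := by
      rcases le_or_gt Y 0 with h | h
      · exact h.trans (Nat.cast_nonneg _)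
      · have hsub : Finset.range ⌈Y⌉₊ ⊆ F := by
          intro i hi
          rw [Finset.mem_range] at hi
          have hiY : (i:ℝ) < Y := by
            have h1 : (i:ℝ) + 1 ≤ (⌈Y⌉₊ : ℝ) := by exact_mod_cast hi
            have h2 : (⌈Y⌉₊ : ℝ) < Y + 1 := Nat.ceil_lt_add_one h.le
            linarith
          have hin : i < n := by
            have : (i:ℝ) < (n:ℝ) := lt_of_lt_of_le hiY (min_le_right _ _)
            exact_mod_cast this
          rw [hF, Finset.mem_filter, Finset.mem_range]
          refine ⟨hin, ?_⟩
          have hIH := (abs_le.mp (ih i hin)).2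
          have hbiR : (b i : ℝ) = (a i : ℝ) + i + ℓ + 1 := by
            rw [hb_all hab i]; push_cast; ring
          have hiY2 : (i:ℝ) < (A - C - 1) / (phi + 1) - ℓ :=
            lt_of_lt_of_le hiY (min_le_left _ _)
          have h2 : ((i:ℝ) + ℓ) * (phi + 1) < A - C - 1 := by
            have h3 : (i:ℝ) + ℓ < (A - C - 1) / (phi + 1) := by linarith
            calc ((i:ℝ) + ℓ) * (phi + 1) < (A - C - 1) / (phi + 1) * (phi + 1) :=
                by exact mul_lt_mul_of_pos_right h3 hφ1
              _ = A - C - 1 := hcY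
          have hlt : (b i : ℝ) < A := by nlinarith
          rw [hA] at hlt
          exact_mod_cast hlt
        have h3 : ⌈Y⌉₊ ≤ F.card := by
          have := Finset.card_le_card hsub
          simpa using this
        calc Y ≤ (⌈Y⌉₊ : ℝ) := Nat.le_ceil Y
          _ ≤ (F.card : ℝ) := by exact_mod_cast h3
    -- auxiliary product facts
    have hℓ0 : (0:ℝ) ≤ (ℓ:ℝ) := by positivity
    have hpl : 1.6 * (ℓ:ℝ) ≤ (ℓ:ℝ) * phi := by
      have := mul_le_mul_of_nonneg_left hφl.le hℓ0; linarith
    have hpn : 1.6 * (n:ℝ) ≤ (n:ℝ) * phi := by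
      have := mul_le_mul_of_nonneg_left hφl.le hn0; linarith
    have hpul : (ℓ:ℝ) * phi ≤ 1.7 * ℓ := by
      have := mul_le_mul_of_nonneg_left hφu.le hℓ0; linarith
    have hpun : (n:ℝ) * phi ≤ 1.7 * n := by
      have := mul_le_mul_of_nonneg_left hφu.le hn0; linarith
    have hφpos0 : (0:ℝ) ≤ phi := by linarith
    have hplφ : phi ≤ (ℓ:ℝ) * phi := by
      have := mul_le_mul_of_nonneg_right hℓR hφpos0; linarith
    have hφn : (n:ℝ) * (phi * phi) = (n:ℝ) * phi + n := by rw [hφ]; ring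
    have hφℓ : (ℓ:ℝ) * (phi * phi) = (ℓ:ℝ) * phi + ℓ := by rw [hφ]; ring
    have hφpos : (0:ℝ) < phi := by linarith
    have hφC : C * phi = 5 * (ℓ:ℝ) * phi + 5 * phi := by rw [hC]; ring
    -- combine
    rw [abs_le]
    constructor
    · -- lower bound : -C ≤ A - (n+ℓ)φ
      rcases le_or_gt ((A - C - 1) / (phi + 1) - ℓ) (n:ℝ) with h | h
      · rw [hY, min_eq_left h] at hflb
        have h1 : (n:ℝ) + 1 + ((A - C - 1) / (phi + 1)) ≤ A := by linarith [hidR]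
        have h2 := mul_le_mul_of_nonneg_right h1 (le_of_lt hφ1)
        by_contra hcon
        push_neg at hcon
        have hcon' : A < ((n:ℝ) + ℓ) * phi - C := by linarith
        have h3 := mul_lt_mul_of_pos_right hcon' hφpos
        linarith [h2, h3, hcY, hφn, hφℓ, hpl, hφC]
      · rw [hY, min_eq_right h.le] at hflb
        have h1 : (n:ℝ) + ℓ + 1 + n ≤ A := by linarith [hidR]
        linarith [hpun, hpul]
    · -- upper bound : A - (n+ℓ)φ ≤ C
      rcases le_or_gt ((A + C - 1) / (phi + 1) - ℓ) 0 with h | h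
      · rw [hX, max_eq_right h] at hfub
        have h1 : A ≤ (n:ℝ) + ℓ + 2 := by linarith [hidR]
        linarith [hpn, hpl]
      · rw [hX, max_eq_left h.le] at hfub
        have h1 : A ≤ (n:ℝ) + 2 + ((A + C - 1) / (phi + 1)) := by linarith [hidR]
        have h2 := mul_le_mul_of_nonneg_right h1 (le_of_lt hφ1)
        by_contra hcon
        push_neg at hcon
        have hcon' : ((n:ℝ) + ℓ) * phi + C < A := by linarith
        have h3 := mul_lt_mul_of_pos_right hcon' hφpos
        linarith [h2, h3, hcX, hφn, hφℓ, hplφ, hφC, hpl]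

theorem mexSeq_bounded_discrepancy (ℓ : ℕ) (hℓ : 1 ≤ ℓ) (a b : ℕ → ℕ)
    (hab : MexSeq ℓ a b) :
    ∃ C : ℝ, ∀ n : ℕ, |(a n : ℝ) - ⌊((n : ℝ) + ℓ) * phi⌋| ≤ C := by
  refine ⟨5 * ℓ + 6, fun n => ?_⟩
  have h1 := main_bound hℓ hab n
  have h2 : (⌊((n : ℝ) + ℓ) * phi⌋ : ℝ) ≤ ((n : ℝ) + ℓ) * phi := Int.floor_le _
  have h3 : ((n : ℝ) + ℓ) * phi < ⌊((n : ℝ) + ℓ) * phi⌋ + 1 := Int.lt_floor_add_one _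
  rw [abs_le] at h1 ⊢
  constructor <;> [linarith [h1.1]; linarith [h1.2]]
end

section
/- Let h be the Hofstadter G-sequence (h(0)=0, h(n)=n-h(h(n-1))). Define g : ℕ → ℕ by g(0) = g(1) = 1 and for n ≥ 2: g(n) = 1 - g(h(n-1)) if h(n-2) < h(n-1), and g(n) = 1 otherwise. Then g takes only values 0 and 1, and the sequence g is Fibonacci-automatic: g(n) is computed by a finite automaton reading the Zeckendorf representation of n. -/
set_option maxHeartbeats 1000000


/-- Value of a list of Fibonacci digits, least significant digit first,
    digit `i` having weight `F_i` where `F_0 = 1, F_1 = 2, F_{k+2}=F_{k+1}+F_k`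
    (i.e. `F_i = fib (i+2)` for Mathlib's `Nat.fib`). -/
def zvalAux : ℕ → List Bool → ℕ
  | _, [] => 0
  | k, d :: L => (if d then Nat.fib k else 0) + zvalAux (k + 1) L

def zval (L : List Bool) : ℕ := zvalAux 2 L

/-- `ZeckRep n L` : `L` (least significant digit first) is the Zeckendorf
    (greedy Fibonacci) representation of `n`: correct value, no two adjacent
    `1`s, and nonzero leading (most significant) digit. -/
def ZeckRep (n : ℕ) (L : List Bool) : Prop :=
  zval L = n ∧ List.Chain' (fun x y => ¬(x = true ∧ y = true)) L ∧
    L.getLast? ≠ some false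

noncomputable def alp : ℝ := (Real.sqrt 5 - 1) / 2

lemma alp_sq : alp ^ 2 + alp = 1 := by
  have h5 : Real.sqrt 5 ^ 2 = 5 := Real.sq_sqrt (by norm_num)
  unfold alp; linear_combination (1/4) * h5

lemma sqrt5_gt : (2:ℝ) < Real.sqrt 5 := by
  have h5 : Real.sqrt 5 ^ 2 = 5 := Real.sq_sqrt (by norm_num)
  nlinarith [Real.sqrt_nonneg 5]

lemma sqrt5_lt : Real.sqrt 5 < 3 := by
  have h5 : Real.sqrt 5 ^ 2 = 5 := Real.sq_sqrt (by norm_num)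
  nlinarith [Real.sqrt_nonneg 5]

lemma alp_half : 1/2 < alp := by unfold alp; linarith [sqrt5_gt]
lemma alp_pos : 0 < alp := by linarith [alp_half]
lemma alp_lt1 : alp < 1 := by unfold alp; linarith [sqrt5_lt]

lemma alp_irr : Irrational alp := by
  have h5 : Irrational (Real.sqrt 5) := by
    have := (by norm_num : Nat.Prime 5).irrational_sqrt
    simpa using this
  have := (h5.sub_intCast 1).div_intCast (m := 2) (by norm_num)
  unfold alp
  convert this using 2 <;> norm_num

lemma irr_nmul (n : ℕ) (hn : n ≠ 0) : Irrational ((n:ℝ) * alp) := alp_irr.natCast_mul hn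

lemma fract_nmul_pos (n : ℕ) (hn : n ≠ 0) : 0 < Int.fract ((n:ℝ) * alp) := by
  rcases lt_or_eq_of_le (Int.fract_nonneg ((n:ℝ) * alp)) with h | h
  · exact h
  · exfalso
    have := Int.floor_add_fract ((n:ℝ) * alp)
    rw [← h] at this
    exact (irr_nmul n hn).ne_int ⌊(n:ℝ) * alp⌋ (by linarith)

lemma fract_helper (x : ℝ) (z : ℤ) (w : ℝ) (hx : x = z + w) (h0 : 0 ≤ w) (h1 : w < 1) :
    Int.fract x = w := by
  rw [hx, Int.fract_intCast_add, Int.fract_eq_self.mpr ⟨h0, h1⟩]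

lemma floor_key (n : ℕ) (hn : 1 ≤ n) :
    ⌊((⌊(n:ℝ) * alp⌋ : ℝ) + 1) * alp⌋ = (n : ℤ) - ⌊((n:ℝ) + 1) * alp⌋ := by
  have ha2 := alp_sq
  have ha0 := alp_pos
  have ha1 := alp_lt1
  set f := Int.fract ((n:ℝ) * alp) with hfdef
  have hf0 : 0 < f := fract_nmul_pos n (by omega)
  have hf1 : f < 1 := Int.fract_lt_one _
  have hB : (⌊(n:ℝ) * alp⌋ : ℝ) = (n:ℝ) * alp - f := by
    rw [hfdef, Int.fract]; ring
  have hne1 : f + alp ≠ 1 := by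
    intro hc
    apply (irr_nmul (n+1) (by omega)).ne_int (⌊(n:ℝ) * alp⌋ + 1)
    push_cast
    linarith [hB]
  have hsplit : ((n:ℝ) + 1) * alp = (⌊(n:ℝ) * alp⌋ : ℝ) + (f + alp) := by
    rw [hB]; ring
  by_cases hc : f + alp < 1
  · have hu : ⌊((n:ℝ) + 1) * alp⌋ = ⌊(n:ℝ) * alp⌋ := by
      rw [hsplit, Int.floor_intCast_add]
      have : ⌊f + alp⌋ = 0 := by
        rw [Int.floor_eq_iff]
        constructor <;> push_cast <;> linarith
      omega
    rw [hu, Int.floor_eq_iff]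
    constructor
    · push_cast
      nlinarith [hB]
    · push_cast
      nlinarith [hB]
  · have hge : 1 < f + alp := lt_of_le_of_ne (not_lt.mp hc) (Ne.symm hne1)
    have hu : ⌊((n:ℝ) + 1) * alp⌋ = ⌊(n:ℝ) * alp⌋ + 1 := by
      rw [hsplit, Int.floor_intCast_add]
      have : ⌊f + alp⌋ = 1 := by
        rw [Int.floor_eq_iff]
        constructor <;> push_cast <;> linarith
      omega
    rw [hu, Int.floor_eq_iff]
    constructor
    · push_cast
      nlinarith [hB]
    · push_cast
      nlinarith [hB]

lemma h_eq (h : ℕ → ℕ) (h0 : h 0 = 0) (hrec : ∀ n : ℕ, 1 ≤ n → h n = n - h (h (n - 1))) :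
    ∀ n : ℕ, (h n : ℤ) = ⌊((n:ℝ) + 1) * alp⌋ := by
  intro n
  induction n using Nat.strong_induction_on with
  | _ n IH =>
    rcases Nat.eq_zero_or_pos n with rfl | hn
    · rw [h0]
      symm
      rw [Int.floor_eq_iff] <;> push_cast <;> simp <;>
        constructor <;> linarith [alp_pos, alp_lt1]
    · -- n ≥ 1
      have ha0 := alp_pos
      have ha1 := alp_lt1
      have hBnn : 0 ≤ ⌊(n:ℝ) * alp⌋ := Int.floor_nonneg.mpr (by positivity)
      have hBlt : ⌊(n:ℝ) * alp⌋ < (n:ℤ) := by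
        rw [Int.floor_lt]
        push_cast
        nlinarith [(by exact_mod_cast hn : (1:ℝ) ≤ (n:ℝ))]
      have hjnn : 0 ≤ ⌊((n:ℝ) + 1) * alp⌋ := Int.floor_nonneg.mpr (by positivity)
      have hjle : ⌊((n:ℝ) + 1) * alp⌋ ≤ (n:ℤ) := by
        have : ⌊((n:ℝ) + 1) * alp⌋ < (n:ℤ) + 1 := by
          rw [Int.floor_lt]; push_cast; nlinarith [Nat.cast_nonneg (α := ℝ) n]
        omega
      have IH1 : (h (n-1) : ℤ) = ⌊(n:ℝ) * alp⌋ := by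
        have := IH (n-1) (by omega)
        rw [this]
        congr 1
        push_cast [Nat.cast_sub hn]
        ring
      have hm : h (n-1) = (⌊(n:ℝ) * alp⌋).toNat := by omega
      have hmlt : h (n-1) < n := by omega
      have IH2 : (h (h (n-1)) : ℤ) = ⌊((⌊(n:ℝ) * alp⌋ : ℝ) + 1) * alp⌋ := by
        have hcast : ((h (n-1) : ℕ) : ℝ) = ((⌊(n:ℝ) * alp⌋ : ℤ) : ℝ) := by
          exact_mod_cast IH1
        rw [IH (h (n-1)) hmlt, hcast]
      rw [floor_key n hn] at IH2
      have hle : h (h (n-1)) ≤ n := by omega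
      rw [hrec n hn]
      push_cast [Nat.cast_sub hle]
      omega

lemma g_eq (h : ℕ → ℕ) (h0 : h 0 = 0) (hrec : ∀ n : ℕ, 1 ≤ n → h n = n - h (h (n - 1)))
    (g : ℕ → ℕ) (hg0 : g 0 = 1) (hg1 : g 1 = 1)
    (hgrec : ∀ n : ℕ, 2 ≤ n →
      g n = if h (n - 2) < h (n - 1) then 1 - g (h (n - 1)) else 1) :
    ∀ n : ℕ, 1 ≤ n → g n = if Int.fract (((n:ℝ) + 1) * alp) < alp then 1 else 0 := by
  have ha2 := alp_sq
  have ha0 := alp_pos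
  have ha1 := alp_lt1
  have hah := alp_half
  intro n
  induction n using Nat.strong_induction_on with
  | _ n IH =>
    intro hn1
    rcases Nat.lt_or_ge n 2 with hn2 | hn2
    · have : n = 1 := by omega
      subst this
      have hfr2 : Int.fract ((((1:ℕ):ℝ) + 1) * alp) = 2 * alp - 1 := by
        apply fract_helper _ 1 _ (by push_cast; ring) (by linarith) (by linarith)
      rw [hfr2, if_pos (by linarith), hg1]
    · -- n ≥ 2
      set f := Int.fract ((n:ℝ) * alp) with hfdef
      have hf0 : 0 < f := fract_nmul_pos n (by omega)
      have hf1 : f < 1 := Int.fract_lt_one _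
      have hB : (⌊(n:ℝ) * alp⌋ : ℝ) = (n:ℝ) * alp - f := by
        rw [hfdef, Int.fract]; ring
      have hfna : f ≠ alp := by
        intro hc
        apply (irr_nmul (n-1) (by omega)).ne_int ⌊(n:ℝ) * alp⌋
        push_cast [Nat.cast_sub (by omega : 1 ≤ n)]
        linarith
      have hfnb : f ≠ 1 - alp := by
        intro hc
        apply (irr_nmul (n+1) (by omega)).ne_int (⌊(n:ℝ) * alp⌋ + 1)
        push_cast
        linarith
      have e1 : (h (n-2) : ℤ) = ⌊((n:ℝ) - 1) * alp⌋ := by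
        rw [h_eq h h0 hrec (n-2)]
        congr 2
        push_cast [Nat.cast_sub hn2]
        ring
      have e2 : (h (n-1) : ℤ) = ⌊(n:ℝ) * alp⌋ := by
        rw [h_eq h h0 hrec (n-1)]
        congr 2
        push_cast [Nat.cast_sub (by omega : 1 ≤ n)]
        ring
      have hsplit : ((n:ℝ) - 1) * alp = (⌊(n:ℝ) * alp⌋ : ℝ) + (f - alp) := by
        rw [hB]; ring
      have hfloor1 : ⌊((n:ℝ) - 1) * alp⌋ = ⌊(n:ℝ) * alp⌋ + ⌊f - alp⌋ := by
        rw [hsplit, Int.floor_intCast_add]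
      have hcond : (h (n-2) < h (n-1)) ↔ f < alp := by
        constructor
        · intro hlt
          by_contra hge
          have hgt : alp < f := lt_of_le_of_ne (not_lt.mp hge) (Ne.symm hfna)
          have hfl : ⌊f - alp⌋ = 0 := by
            rw [Int.floor_eq_iff]
            constructor <;> push_cast <;> linarith
          have : (h (n-2) : ℤ) < (h (n-1) : ℤ) := by exact_mod_cast hlt
          omega
        · intro hlt
          have hfl : ⌊f - alp⌋ = -1 := by
            rw [Int.floor_eq_iff]
            constructor <;> push_cast <;> linarith
          have : (h (n-2) : ℤ) < (h (n-1) : ℤ) := by omega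
          exact_mod_cast this
      rw [hgrec n hn2]
      by_cases hca : f < alp
      · rw [if_pos (hcond.mpr hca)]
        have hmZ : (h (n-1) : ℤ) = ⌊(n:ℝ) * alp⌋ := e2
        set m := h (n-1) with hmdef
        have hm1 : 1 ≤ m := by
          have h2n : (2:ℝ) ≤ (n:ℝ) := by exact_mod_cast hn2
          have h2a : 2 * alp ≤ (n:ℝ) * alp := by nlinarith
          have : (1:ℤ) ≤ ⌊(n:ℝ) * alp⌋ := by
            rw [Int.le_floor]
            push_cast
            linarith
          omega
        have hmlt : m < n := by
          have : ⌊(n:ℝ) * alp⌋ < (n:ℤ) := by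
            rw [Int.floor_lt]
            push_cast
            nlinarith [(by exact_mod_cast hn1 : (1:ℝ) ≤ (n:ℝ))]
          omega
        have IHm := IH m hmlt hm1
        have hmr : (m:ℝ) = (n:ℝ) * alp - f := by
          have := congrArg (fun z : ℤ => (z : ℝ)) hmZ
          push_cast at this
          rw [this, hB]
        by_cases hcb : f < 1 - alp
        · have hw0 : 0 ≤ alp - f - f * alp := by nlinarith
          have hw1 : alp - f - f * alp < 1 := by nlinarith
          have hfrm : Int.fract (((m:ℝ) + 1) * alp) = alp - f - f * alp := by
            apply fract_helper _ ((n:ℤ) - ⌊(n:ℝ) * alp⌋) _ ?_ hw0 hw1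
            push_cast
            rw [hB, hmr]
            linear_combination (n:ℝ) * ha2
          have hgm : g m = 1 := by
            rw [IHm, if_pos]
            rw [hfrm]
            nlinarith
          have hfrn : Int.fract (((n:ℝ) + 1) * alp) = f + alp := by
            apply fract_helper _ ⌊(n:ℝ) * alp⌋ _ ?_ (by linarith) (by linarith)
            rw [hB]; ring
          rw [hgm, hfrn, if_neg (by linarith)]
        · have hfb : 1 - alp < f := lt_of_le_of_ne (not_lt.mp hcb) (Ne.symm hfnb)
          have hw0 : 0 ≤ alp - f - f * alp + 1 := by nlinarith
          have hw1 : alp - f - f * alp + 1 < 1 := by nlinarith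
          have hwa : alp < alp - f - f * alp + 1 := by nlinarith
          have hfrm : Int.fract (((m:ℝ) + 1) * alp) = alp - f - f * alp + 1 := by
            apply fract_helper _ ((n:ℤ) - ⌊(n:ℝ) * alp⌋ - 1) _ ?_ hw0 hw1
            push_cast
            rw [hB, hmr]
            linear_combination (n:ℝ) * ha2
          have hgm : g m = 0 := by
            rw [IHm, if_neg]
            rw [hfrm]
            linarith
          have hfrn : Int.fract (((n:ℝ) + 1) * alp) = f + alp - 1 := by
            apply fract_helper _ (⌊(n:ℝ) * alp⌋ + 1) _ ?_ (by linarith) (by linarith)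
            push_cast
            rw [hB]; ring
          rw [hgm, hfrn, if_pos (by linarith)]
      · rw [if_neg (fun hc => hca (hcond.mp hc))]
        have hgt : alp < f := lt_of_le_of_ne (not_lt.mp hca) (Ne.symm hfna)
        have hfrn : Int.fract (((n:ℝ) + 1) * alp) = f + alp - 1 := by
          apply fract_helper _ (⌊(n:ℝ) * alp⌋ + 1) _ ?_ (by linarith) (by linarith)
          push_cast
          rw [hB]; ring
        rw [hfrn, if_pos (by linarith)]

noncomputable def Ee (k : ℕ) (L : List Bool) : ℝ :=
  alp * (zvalAux (k+1) L : ℝ) - (zvalAux k L : ℝ)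

lemma eps : ∀ k : ℕ, alp * (Nat.fib (k+1) : ℝ) = (Nat.fib k : ℝ) + (-alp)^k * alp := by
  intro k
  induction k with
  | zero => simp
  | succ k ih =>
    have hf2 : (Nat.fib (k+2) : ℝ) = (Nat.fib k : ℝ) + (Nat.fib (k+1) : ℝ) := by
      push_cast [Nat.fib_add_two]; ring
    have ha2 := alp_sq
    linear_combination alp * hf2 - alp * ih + ((Nat.fib (k+1) : ℝ)) * ha2

lemma Ee_nil (k : ℕ) : Ee k [] = 0 := by simp [Ee, zvalAux]

lemma Ee_cons (k : ℕ) (d : Bool) (L : List Bool) :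
    Ee k (d :: L) = (if d then (-alp)^k * alp else 0) + Ee (k+1) L := by
  cases d <;> simp only [Ee, zvalAux, if_true, if_false] <;> push_cast <;>
    [ring; linear_combination eps k]

lemma Ebd (L : List Bool) : ∀ k : ℕ,
    (Even k → -alp^(k+1) < Ee k L ∧ Ee k L < alp^k) ∧
    (¬ Even k → -alp^k < Ee k L ∧ Ee k L < alp^(k+1)) := by
  induction L with
  | nil =>
    intro k
    rw [Ee_nil]
    have p1 : (0:ℝ) < alp^k := pow_pos alp_pos k
    have p2 : (0:ℝ) < alp^(k+1) := pow_pos alp_pos (k+1)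
    exact ⟨fun _ => ⟨by linarith, by linarith⟩, fun _ => ⟨by linarith, by linarith⟩⟩
  | cons d L IH =>
    intro k
    have IH' := IH (k+1)
    have hp : (0:ℝ) < alp^k := pow_pos alp_pos k
    have hq : alp^(k+1) = alp^k * alp := pow_succ alp k
    have hq0 : (0:ℝ) < alp^(k+1) := pow_pos alp_pos (k+1)
    have hr : alp^(k+2) = alp^k - alp^k * alp := by
      have h1 : alp^(k+2) = alp^k * alp^2 := by ring
      rw [h1]
      have ha2 := alp_sq
      nlinarith [hp]
    rw [Ee_cons]
    cases d
    · simp only [if_false, Bool.false_eq_true, zero_add]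
      constructor
      · intro hk
        have hodd : ¬ Even (k+1) := by simp [Nat.even_add_one, hk]
        obtain ⟨l1, l2⟩ := IH'.2 hodd
        constructor <;> nlinarith
      · intro hk
        have heven : Even (k+1) := by simp [Nat.even_add_one, hk]
        obtain ⟨l1, l2⟩ := IH'.1 heven
        constructor <;> nlinarith
    · simp only [if_true]
      constructor
      · intro hk
        have hpow : (-alp)^k = alp^k := hk.neg_pow alp
        have hodd : ¬ Even (k+1) := by simp [Nat.even_add_one, hk]
        obtain ⟨l1, l2⟩ := IH'.2 hodd
        rw [hpow]
        constructor <;> nlinarith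
      · intro hk
        have hpow : (-alp)^k = -alp^k := (Nat.not_even_iff_odd.mp hk).neg_pow alp
        have heven : Even (k+1) := by simp [Nat.even_add_one, hk]
        obtain ⟨l1, l2⟩ := IH'.1 heven
        rw [hpow]
        constructor <;> nlinarith

def firstTrue : List Bool → Option ℕ
  | [] => none
  | true :: _ => some 0
  | false :: L => (firstTrue L).map (· + 1)

lemma Esign (L : List Bool) : ∀ k j : ℕ, firstTrue L = some j →
    (Even (k + j) → 0 < Ee k L) ∧ (¬ Even (k + j) → Ee k L < 0) := by
  induction L with
  | nil => intro k j hj; simp [firstTrue] at hj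
  | cons d L IH =>
    intro k j hj
    cases d
    · simp only [firstTrue, Option.map_eq_some_iff] at hj
      obtain ⟨j', hj', rfl⟩ := hj
      have := IH (k+1) j' hj'
      rw [Ee_cons]
      simp only [if_false, Bool.false_eq_true, zero_add]
      have harith : k + 1 + j' = k + (j' + 1) := by omega
      rw [harith] at this
      exact this
    · simp only [firstTrue, Option.some_inj] at hj
      subst hj
      rw [Ee_cons]
      simp only [if_true]
      have hq0 : (0:ℝ) < alp^(k+1) := pow_pos alp_pos (k+1)
      constructor
      · intro hk
        rw [Nat.add_zero] at hk
        have hpow : (-alp)^k = alp^k := hk.neg_pow alp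
        have hodd : ¬ Even (k+1) := by simp [Nat.even_add_one, hk]
        obtain ⟨l1, l2⟩ := (Ebd L (k+1)).2 hodd
        rw [hpow, pow_succ] at *
        nlinarith [pow_pos alp_pos k]
      · intro hk
        rw [Nat.add_zero] at hk
        have hpow : (-alp)^k = -alp^k := (Nat.not_even_iff_odd.mp hk).neg_pow alp
        have heven : Even (k+1) := by simp [Nat.even_add_one, hk]
        obtain ⟨l1, l2⟩ := (Ebd L (k+1)).1 heven
        rw [hpow, pow_succ] at *
        nlinarith [pow_pos alp_pos k]

lemma zval_none : ∀ L : List Bool, firstTrue L = none → ∀ k, zvalAux k L = 0 := by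
  intro L
  induction L with
  | nil => intro _ k; rfl
  | cons d L IH =>
    intro hd k
    cases d
    · simp only [firstTrue, Option.map_eq_none_iff] at hd
      simp [zvalAux, IH hd]
    · simp [firstTrue] at hd

lemma zval_pos : ∀ (L : List Bool) (j : ℕ), firstTrue L = some j →
    ∀ k, 1 ≤ k → 1 ≤ zvalAux k L := by
  intro L
  induction L with
  | nil => intro j hj; simp [firstTrue] at hj
  | cons d L IH =>
    intro j hj k hk
    cases d
    · simp only [firstTrue, Option.map_eq_some_iff] at hj
      obtain ⟨j', hj', rfl⟩ := hj
      have := IH j' hj' (k+1) (by omega)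
      simp [zvalAux]
      omega
    · have : 0 < Nat.fib k := Nat.fib_pos.mpr (by omega)
      simp [zvalAux]
      omega

def dlt : Fin 3 → Bool → Fin 3 := fun q b => if b then 1 else ![0, 2, 1] q

lemma stt_spec : ∀ L : List Bool,
    L.foldr (fun x y => dlt y x) 0 =
      (match firstTrue L with
       | none => (0 : Fin 3)
       | some j => if Even j then 1 else 2) := by
  intro L
  induction L with
  | nil => rfl
  | cons d L IH =>
    cases d
    · simp only [List.foldr_cons, IH, firstTrue]
      cases hft : firstTrue L with
      | none => simp [dlt]
      | some j =>
        simp only [Option.map_some]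
        by_cases hj : Even j
        · rw [if_pos hj]
          have : ¬ Even (j + 1) := by simp [Nat.even_add_one, hj]
          rw [if_neg this]
          rfl
        · rw [if_neg hj]
          have : Even (j + 1) := by simp [Nat.even_add_one, hj]
          rw [if_pos this]
          rfl
    · simp [firstTrue, dlt]

/-- The sequence `g` built from the Hofstadter G-sequence `h` takes only the
    values `0` and `1`, and is Fibonacci-automatic: there is a finite automaton
    with output computing `g n` from the Zeckendorf representation of `n` read
    most significant digit first. -/
theorem g_fibonacci_automatic (h : ℕ → ℕ)
    (h0 : h 0 = 0)
    (hrec : ∀ n : ℕ, 1 ≤ n → h n = n - h (h (n - 1)))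
    (g : ℕ → ℕ)
    (hg0 : g 0 = 1) (hg1 : g 1 = 1)
    (hgrec : ∀ n : ℕ, 2 ≤ n →
      g n = if h (n - 2) < h (n - 1) then 1 - g (h (n - 1)) else 1) :
    (∀ n : ℕ, g n = 0 ∨ g n = 1) ∧
    ∃ (Q : Type) (_ : Fintype Q) (init : Q) (δ : Q → Bool → Q) (out : Q → ℕ),
      ∀ (n : ℕ) (L : List Bool), ZeckRep n L →
        g n = out (L.reverse.foldl δ init) := by
  constructor
  · intro n
    rcases Nat.lt_or_ge n 2 with hn | hn
    · interval_cases n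
      · rw [hg0]; right; rfl
      · rw [hg1]; right; rfl
    · rw [hgrec n hn]
      split_ifs
      · omega
      · right; rfl
  · refine ⟨Fin 3, inferInstance, 0, dlt, fun q => if q = 2 then 0 else 1, ?_⟩
    intro n L hZ
    obtain ⟨hv, _, _⟩ := hZ
    rw [List.foldl_reverse, stt_spec L]
    cases hft : firstTrue L with
    | none =>
      have : zval L = 0 := zval_none L hft 2
      rw [this] at hv
      subst hv
      simp only [hft, hg0]
      decide
    | some j =>
      have hn1 : 1 ≤ n := by
        have := zval_pos L j hft 2 (by omega)
        unfold zval at hv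
        omega
      have ha2 := alp_sq
      have ha0 := alp_pos
      have hfr : Int.fract (((n:ℝ) + 1) * alp) = alp + Ee 1 L := by
        obtain ⟨l1, l2⟩ := (Ebd L 1).2 (by simp)
        apply fract_helper _ ((zvalAux 1 L : ℕ) : ℤ) _ ?_ ?_ ?_
        · have hvz : (zvalAux 2 L : ℝ) = (n : ℝ) := by
            exact_mod_cast congrArg (fun x : ℕ => (x:ℝ)) hv
          unfold Ee
          push_cast
          rw [hvz]
          ring
        · norm_num at l1 ⊢
          linarith
        · norm_num at l2 ⊢
          nlinarith
      rw [g_eq h h0 hrec g hg0 hg1 hgrec n hn1, hfr]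
      have hsgn := Esign L 1 j hft
      simp only [hft]
      by_cases hj : Even j
      · have hodd : ¬ Even (1 + j) := by
          simp [Nat.even_add, hj]
        have := hsgn.2 hodd
        rw [if_pos (by linarith : alp + Ee 1 L < alp)]
        simp only [if_pos hj]
        decide
      · have heven : Even (1 + j) := by
          simp [Nat.even_add, hj]
        have := hsgn.1 heven
        rw [if_neg (by linarith : ¬ alp + Ee 1 L < alp)]
        simp only [if_neg hj]
        decide
end
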